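/- Let μ be a finite Borel measure on the circle ℝ/ℤ (equivalently, on [0,1) with addition mod 1). Then μ is non-atomic (μ({x}) = 0 for every point x) if and only if there exists a set S ⊆ ℤ of full density, i.e. lim_{n→∞} #(S ∩ [-n,n]) / (2n+1) = 1, such that the Fourier coefficients μ̂(k) = ∫ e^{2πikt} dμ(t) tend to 0 as |k| → ∞ along k ∈ S. -/

import Mathlib

open MeasureTheory Filter Finset Complex

lemma wn_card_Icc (n : ℕ) : ((Finset.Icc (-(n : ℤ)) n).card) = 2 * n + 1 := by
  rw [Int.card_Icc]; omega

lemma wn_ncard_Icc (n : ℕ) : ((Set.Icc (-(n : ℤ)) n).ncard : ℝ) = 2 * n + 1 := by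
  rw [← Finset.coe_Icc, Set.ncard_coe_finset, wn_card_Icc]; push_cast; ring

lemma wn_partition (S : Set ℤ) (n : ℕ) :
    (S ∩ Set.Icc (-(n : ℤ)) n).ncard + (Sᶜ ∩ Set.Icc (-(n : ℤ)) n).ncard
      = (Set.Icc (-(n : ℤ)) n).ncard := by
  rw [← Set.ncard_union_eq (Disjoint.mono Set.inter_subset_left Set.inter_subset_left
      disjoint_compl_right)
      ((Set.finite_Icc _ _).subset Set.inter_subset_right)
      ((Set.finite_Icc _ _).subset Set.inter_subset_right),
    ← Set.union_inter_distrib_right, Set.union_compl_self, Set.univ_inter]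

lemma wn_ratio_compl (S : Set ℤ) (n : ℕ) :
    ((Sᶜ ∩ Set.Icc (-(n : ℤ)) n).ncard : ℝ) / (2 * n + 1)
      = 1 - ((S ∩ Set.Icc (-(n : ℤ)) n).ncard : ℝ) / (2 * n + 1) := by
  have h := wn_partition S n
  have h2 : (0:ℝ) < 2 * n + 1 := by positivity
  field_simp
  rw [← wn_ncard_Icc n, ← h]
  push_cast; ring

lemma wn_extract (a : ℤ → ℝ) (ha : ∀ k, 0 ≤ a k)
    (hc : Tendsto (fun n : ℕ => (∑ k ∈ Finset.Icc (-(n : ℤ)) n, a k) / (2 * n + 1))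
      atTop (nhds 0)) :
    ∃ S : Set ℤ,
      Tendsto (fun n : ℕ => ((S ∩ Set.Icc (-(n : ℤ)) n).ncard : ℝ) / (2 * n + 1))
        atTop (nhds 1) ∧
      ∀ ε > (0 : ℝ), ∃ N : ℕ, ∀ k ∈ S, (N : ℤ) ≤ |k| → a k < ε := by
  classical
  -- Markov inequality for the "bad" sets
  have markov : ∀ (j n : ℕ),
      (((Finset.Icc (-(n : ℤ)) n).filter (fun k => 1 / ((j : ℝ) + 1) < a k)).card : ℝ)
        ≤ ((j : ℝ) + 1) * ∑ k ∈ Finset.Icc (-(n : ℤ)) n, a k := by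
    intro j n
    have hj : (0:ℝ) < (j : ℝ) + 1 := by positivity
    have h1 : (((Finset.Icc (-(n : ℤ)) n).filter (fun k => 1 / ((j : ℝ) + 1) < a k)).card : ℝ)
        * (1 / ((j : ℝ) + 1))
        ≤ ∑ k ∈ (Finset.Icc (-(n : ℤ)) n).filter (fun k => 1 / ((j : ℝ) + 1) < a k), a k := by
      have := Finset.card_nsmul_le_sum
        ((Finset.Icc (-(n : ℤ)) n).filter (fun k => 1 / ((j : ℝ) + 1) < a k)) a
        (1 / ((j : ℝ) + 1)) (fun x hx => le_of_lt (Finset.mem_filter.1 hx).2)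
      simpa [nsmul_eq_mul, mul_comm] using this
    have h2 : ∑ k ∈ (Finset.Icc (-(n : ℤ)) n).filter (fun k => 1 / ((j : ℝ) + 1) < a k), a k
        ≤ ∑ k ∈ Finset.Icc (-(n : ℤ)) n, a k :=
      Finset.sum_le_sum_of_subset_of_nonneg (Finset.filter_subset _ _)
        (fun i _ _ => ha i)
    have := h1.trans h2
    rw [div_eq_mul_inv, one_mul] at this ⊢
    calc (((Finset.Icc (-(n : ℤ)) n).filter (fun k => ((j : ℝ) + 1)⁻¹ < a k)).card : ℝ)
        = (((Finset.Icc (-(n : ℤ)) n).filter (fun k => ((j : ℝ) + 1)⁻¹ < a k)).card : ℝ)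
          * ((j : ℝ) + 1)⁻¹ * ((j : ℝ) + 1) := by field_simp
      _ ≤ (∑ k ∈ Finset.Icc (-(n : ℤ)) n, a k) * ((j : ℝ) + 1) := by
          apply mul_le_mul_of_nonneg_right this (le_of_lt hj)
      _ = ((j : ℝ) + 1) * ∑ k ∈ Finset.Icc (-(n : ℤ)) n, a k := by ring
  -- choose thresholds
  have hchoice : ∀ j : ℕ, ∃ Nj : ℕ, ∀ n ≥ Nj,
      (∑ k ∈ Finset.Icc (-(n : ℤ)) n, a k) / (2 * n + 1)
        ≤ 1 / (((j : ℝ) + 1) * ((j : ℝ) + 1)) := by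
    intro j
    have hpos : (0:ℝ) < 1 / (((j : ℝ) + 1) * ((j : ℝ) + 1)) := by positivity
    have := hc.eventually (gt_mem_nhds hpos)
    rcases eventually_atTop.1 this with ⟨N, hN⟩
    exact ⟨N, fun n hn => le_of_lt (hN n hn)⟩
  choose f hf using hchoice
  -- increasing scale
  obtain ⟨N, hN0, hNs⟩ : ∃ N : ℕ → ℕ, N 0 = f 0 ∧ ∀ j, N (j + 1) = max (N j + 1) (f (j + 1)) :=
    ⟨fun j => Nat.rec (motive := fun _ => ℕ) (f 0)
      (fun j' Nj' => max (Nj' + 1) (f (j' + 1))) j, rfl, fun j => rfl⟩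
  have hNsucc : ∀ j, N j < N (j + 1) := fun j => by
    rw [hNs]; exact lt_of_lt_of_le (Nat.lt_succ_self _) (le_max_left _ _)
  have hNmono : StrictMono N := strictMono_nat_of_lt_succ hNsucc
  have hNf : ∀ j, f j ≤ N j := by
    intro j
    cases j with
    | zero => rw [hN0]
    | succ j' => rw [hNs]; exact le_max_right _ _
  have hNge : ∀ j, j ≤ N j := fun j => (hNmono.le_apply).trans (le_refl _)
  -- the index function
  let m : ℕ → ℕ := fun n => Nat.findGreatest (fun j => N j ≤ n) n
  have hmle : ∀ j n, N j ≤ n → j ≤ m n := by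
    intro j n h
    exact Nat.le_findGreatest ((hNge j).trans h) h
  have hm0 : ∀ n, f 0 ≤ n → N (m n) ≤ n := by
    intro n h
    exact Nat.findGreatest_spec (P := fun j => N j ≤ n) (Nat.zero_le n) (show N 0 ≤ n by rw [hN0]; exact h)
  have hmmono : Monotone m := by
    intro i j hij
    exact Nat.findGreatest_mono (fun k (hk : N k ≤ i) => hk.trans hij) hij
  have hmtop : Tendsto m atTop atTop :=
    tendsto_atTop_atTop.2 (fun b => ⟨N b, fun n hn => hmle b n hn⟩)
  refine ⟨{k : ℤ | a k ≤ 1 / ((m k.natAbs : ℝ) + 1)}, ?_, ?_⟩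
  · -- density
    have key : ∀ n : ℕ, f 0 ≤ n →
        (({k : ℤ | a k ≤ 1 / ((m k.natAbs : ℝ) + 1)}ᶜ ∩ Set.Icc (-(n : ℤ)) n).ncard : ℝ)
          / (2 * n + 1) ≤ 1 / ((m n : ℝ) + 1) := by
      intro n hn
      set J := m n with hJ
      have hsub : {k : ℤ | a k ≤ 1 / ((m k.natAbs : ℝ) + 1)}ᶜ ∩ Set.Icc (-(n : ℤ)) n
          ⊆ ↑((Finset.Icc (-(n : ℤ)) n).filter (fun k => 1 / ((J : ℝ) + 1) < a k)) := by
        rintro k ⟨hk1, hk2⟩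
        simp only [Set.mem_compl_iff, Set.mem_setOf_eq, not_le] at hk1
        rw [Set.mem_Icc] at hk2
        have hkn : k.natAbs ≤ n := by omega
        have hmk : m k.natAbs ≤ J := hmmono hkn
        have : 1 / ((J : ℝ) + 1) ≤ 1 / ((m k.natAbs : ℝ) + 1) := by
          apply one_div_le_one_div_of_le (by positivity)
          exact_mod_cast Nat.add_le_add_right hmk 1
        simp only [Finset.coe_filter, Set.mem_setOf_eq, Finset.mem_Icc]
        exact ⟨⟨hk2.1, hk2.2⟩, lt_of_le_of_lt this hk1⟩
      have hcard : (({k : ℤ | a k ≤ 1 / ((m k.natAbs : ℝ) + 1)}ᶜ ∩ Set.Icc (-(n : ℤ)) n).ncard : ℝ)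
          ≤ (((Finset.Icc (-(n : ℤ)) n).filter (fun k => 1 / ((J : ℝ) + 1) < a k)).card : ℝ) := by
        have := Set.ncard_le_ncard hsub (Finset.finite_toSet _)
        rw [Set.ncard_coe_finset] at this
        exact_mod_cast this
      have hfJ : f J ≤ n := (hNf J).trans (hm0 n hn)
      have hM := markov J n
      have hC := hf J n hfJ
      have h2n : (0:ℝ) < 2 * n + 1 := by positivity
      have hJp : (0:ℝ) < (J : ℝ) + 1 := by positivity
      calc (({k : ℤ | a k ≤ 1 / ((m k.natAbs : ℝ) + 1)}ᶜ ∩ Set.Icc (-(n : ℤ)) n).ncard : ℝ)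
            / (2 * n + 1)
          ≤ (((J : ℝ) + 1) * ∑ k ∈ Finset.Icc (-(n : ℤ)) n, a k) / (2 * n + 1) := by
            apply div_le_div_of_nonneg_right (hcard.trans hM) h2n.le |>.trans_eq rfl
        _ = ((J : ℝ) + 1) * ((∑ k ∈ Finset.Icc (-(n : ℤ)) n, a k) / (2 * n + 1)) := by ring
        _ ≤ ((J : ℝ) + 1) * (1 / (((J : ℝ) + 1) * ((J : ℝ) + 1))) :=
            mul_le_mul_of_nonneg_left hC (le_of_lt hJp)
        _ = 1 / ((J : ℝ) + 1) := by field_simp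
    -- squeeze the complement ratio to 0
    have hcompl : Tendsto (fun n : ℕ =>
        (({k : ℤ | a k ≤ 1 / ((m k.natAbs : ℝ) + 1)}ᶜ ∩ Set.Icc (-(n : ℤ)) n).ncard : ℝ)
          / (2 * n + 1)) atTop (nhds 0) := by
      have hg : Tendsto (fun n : ℕ => 1 / ((m n : ℝ) + 1)) atTop (nhds 0) := by
        have h1 : Tendsto (fun j : ℕ => 1 / ((j : ℝ) + 1)) atTop (nhds 0) :=
          tendsto_one_div_add_atTop_nhds_zero_nat
        exact h1.comp hmtop
      refine tendsto_of_tendsto_of_tendsto_of_le_of_le' tendsto_const_nhds hg ?_ ?_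
      · exact Eventually.of_forall (fun n => by positivity)
      · exact eventually_atTop.2 ⟨f 0, key⟩
    have hone : Tendsto (fun _ : ℕ => (1:ℝ)) atTop (nhds 1) := tendsto_const_nhds
    have h2 := hone.sub hcompl
    rw [sub_zero] at h2
    refine h2.congr fun n => ?_
    rw [wn_ratio_compl]; ring
  · -- convergence along S
    intro ε hε
    obtain ⟨j, hj⟩ := exists_nat_one_div_lt hε
    refine ⟨N j, fun k hk hNk => ?_⟩
    have hkn : N j ≤ k.natAbs := by
      rw [Int.abs_eq_natAbs] at hNk
      exact_mod_cast hNk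
    have hjm : j ≤ m k.natAbs := hmle j _ hkn
    have : (1:ℝ) / ((m k.natAbs : ℝ) + 1) ≤ 1 / ((j : ℝ) + 1) := by
      apply one_div_le_one_div_of_le (by positivity)
      exact_mod_cast Nat.add_le_add_right hjm 1
    exact lt_of_le_of_lt (le_trans hk this) hj

lemma wn_cesaro (a : ℤ → ℝ) (ha : ∀ k, 0 ≤ a k) (M : ℝ) (hM : ∀ k, a k ≤ M)
    (S : Set ℤ)
    (hS : Tendsto (fun n : ℕ => ((S ∩ Set.Icc (-(n : ℤ)) n).ncard : ℝ) / (2 * n + 1))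
      atTop (nhds 1))
    (hconv : ∀ ε > (0 : ℝ), ∃ N : ℕ, ∀ k ∈ S, (N : ℤ) ≤ |k| → a k < ε) :
    Tendsto (fun n : ℕ => (∑ k ∈ Finset.Icc (-(n : ℤ)) n, a k) / (2 * n + 1))
      atTop (nhds 0) := by
  classical
  have hM0 : 0 ≤ M := le_trans (ha 0) (hM 0)
  have hcompl : Tendsto (fun n : ℕ =>
      ((Sᶜ ∩ Set.Icc (-(n : ℤ)) n).ncard : ℝ) / (2 * n + 1)) atTop (nhds 0) := by
    have hone : Tendsto (fun _ : ℕ => (1:ℝ)) atTop (nhds 1) := tendsto_const_nhds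
    have h2 := hone.sub hS
    rw [sub_self] at h2
    refine h2.congr fun n => ?_
    rw [wn_ratio_compl]
  rw [Metric.tendsto_atTop]
  intro ε hε
  have hε3 : (0:ℝ) < ε / 3 := by linarith
  obtain ⟨N, hN⟩ := hconv (ε / 3) hε3
  -- eventually M * complratio < ε/3
  have h1 : ∀ᶠ n : ℕ in atTop,
      M * (((Sᶜ ∩ Set.Icc (-(n : ℤ)) n).ncard : ℝ) / (2 * n + 1)) < ε / 3 := by
    have := (hcompl.const_mul M).eventually (gt_mem_nhds (show M * 0 < ε / 3 by simpa using hε3))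
    simpa using this
  -- eventually M * (2N+1)/(2n+1) < ε/3
  have h2 : ∀ᶠ n : ℕ in atTop, M * ((2 * N + 1 : ℝ) / (2 * n + 1)) < ε / 3 := by
    have hb : Tendsto (fun n : ℕ => (2 * (n:ℝ) + 1)) atTop atTop := by
      apply Filter.tendsto_atTop_add_const_right
      exact Tendsto.const_mul_atTop two_pos tendsto_natCast_atTop_atTop
    have hd0 : Tendsto (fun n : ℕ => (2 * N + 1 : ℝ) / (2 * n + 1)) atTop (nhds 0) :=
      Filter.Tendsto.div_atTop tendsto_const_nhds hb
    have hd : Tendsto (fun n : ℕ => M * ((2 * N + 1 : ℝ) / (2 * n + 1))) atTop (nhds 0) := by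
      have := hd0.const_mul M
      rwa [mul_zero] at this
    exact hd.eventually (gt_mem_nhds hε3)
  rcases eventually_atTop.1 (h1.and h2) with ⟨N₀, hN₀⟩
  refine ⟨N₀, fun n hn => ?_⟩
  obtain ⟨hb1, hb2⟩ := hN₀ n hn
  have h2n : (0:ℝ) < 2 * n + 1 := by positivity
  set I := Finset.Icc (-(n : ℤ)) n with hI
  have hIcard : (I.card : ℝ) = 2 * n + 1 := by rw [wn_card_Icc]; push_cast; ring
  set P : ℤ → Prop := fun k => k ∈ S ∧ (N : ℤ) ≤ |k| with hP
  -- split the sum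
  have hsplit : ∑ k ∈ I, a k = ∑ k ∈ I.filter P, a k + ∑ k ∈ I.filter (fun k => ¬ P k), a k :=
    (Finset.sum_filter_add_sum_filter_not I P a).symm
  have hgood : ∑ k ∈ I.filter P, a k ≤ (2 * n + 1) * (ε / 3) := by
    calc ∑ k ∈ I.filter P, a k ≤ (I.filter P).card • (ε / 3) := by
          apply Finset.sum_le_card_nsmul
          intro x hx
          exact le_of_lt (hN x (Finset.mem_filter.1 hx).2.1 (Finset.mem_filter.1 hx).2.2)
      _ = ((I.filter P).card : ℝ) * (ε / 3) := by rw [nsmul_eq_mul]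
      _ ≤ (2 * n + 1) * (ε / 3) := by
          apply mul_le_mul_of_nonneg_right _ hε3.le
          rw [← hIcard]
          exact_mod_cast Finset.card_le_card (Finset.filter_subset _ _)
  have hbadsub : I.filter (fun k => ¬ P k)
      ⊆ I.filter (fun k => k ∉ S) ∪ I.filter (fun k => ¬ ((N : ℤ) ≤ |k|)) := by
    intro k hk
    rw [Finset.mem_filter] at hk
    rw [Finset.mem_union, Finset.mem_filter, Finset.mem_filter]
    rcases not_and_or.1 hk.2 with h | h
    · exact Or.inl ⟨hk.1, h⟩
    · exact Or.inr ⟨hk.1, h⟩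
  have hcard1 : ((I.filter (fun k => k ∉ S)).card : ℝ)
      = ((Sᶜ ∩ Set.Icc (-(n : ℤ)) n).ncard : ℝ) := by
    congr 1
    rw [← Set.ncard_coe_finset]
    congr 1
    ext k
    simp [hI, Set.mem_Icc, and_comm]
  have hcard2 : ((I.filter (fun k => ¬ ((N : ℤ) ≤ |k|))).card : ℝ) ≤ 2 * N + 1 := by
    have hsub : I.filter (fun k => ¬ ((N : ℤ) ≤ |k|)) ⊆ Finset.Icc (-(N : ℤ)) N := by
      intro k hk
      rw [Finset.mem_filter] at hk
      rw [Finset.mem_Icc]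
      have hk2 := hk.2
      rw [not_le, abs_lt] at hk2
      omega
    calc ((I.filter (fun k => ¬ ((N : ℤ) ≤ |k|))).card : ℝ)
        ≤ ((Finset.Icc (-(N : ℤ)) N).card : ℝ) := by exact_mod_cast Finset.card_le_card hsub
      _ = 2 * N + 1 := by rw [wn_card_Icc]; push_cast; ring
  have hbad : ∑ k ∈ I.filter (fun k => ¬ P k), a k
      ≤ M * ((Sᶜ ∩ Set.Icc (-(n : ℤ)) n).ncard : ℝ) + M * (2 * N + 1) := by
    calc ∑ k ∈ I.filter (fun k => ¬ P k), a k
        ≤ (I.filter (fun k => ¬ P k)).card • M :=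
          Finset.sum_le_card_nsmul _ _ _ (fun x _ => hM x)
      _ = ((I.filter (fun k => ¬ P k)).card : ℝ) * M := by rw [nsmul_eq_mul]
      _ ≤ (((I.filter (fun k => k ∉ S)).card : ℝ)
            + ((I.filter (fun k => ¬ ((N : ℤ) ≤ |k|))).card : ℝ)) * M := by
          apply mul_le_mul_of_nonneg_right _ hM0
          have := Finset.card_le_card hbadsub
          have := this.trans (Finset.card_union_le _ _)
          exact_mod_cast this
      _ ≤ M * ((Sᶜ ∩ Set.Icc (-(n : ℤ)) n).ncard : ℝ) + M * (2 * N + 1) := by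
          rw [hcard1]
          nlinarith [hcard2, Nat.card_coe_set_eq (Sᶜ ∩ Set.Icc (-(n : ℤ)) n)]
  have hnn : 0 ≤ ∑ k ∈ I, a k := Finset.sum_nonneg (fun i _ => ha i)
  rw [Real.dist_eq, sub_zero, _root_.abs_of_nonneg (by positivity)]
  have : (∑ k ∈ I, a k) / (2 * n + 1)
      ≤ ε / 3 + (M * (((Sᶜ ∩ Set.Icc (-(n : ℤ)) n).ncard : ℝ) / (2 * n + 1))
          + M * ((2 * N + 1 : ℝ) / (2 * n + 1))) := by
    rw [hsplit, add_div]
    have g1 : (∑ k ∈ I.filter P, a k) / (2 * n + 1) ≤ ε / 3 := by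
      rw [div_le_iff₀ h2n]; linarith [hgood]
    have g2 : (∑ k ∈ I.filter (fun k => ¬ P k), a k) / (2 * n + 1)
        ≤ M * (((Sᶜ ∩ Set.Icc (-(n : ℤ)) n).ncard : ℝ) / (2 * n + 1))
          + M * ((2 * N + 1 : ℝ) / (2 * n + 1)) := by
      rw [div_le_iff₀ h2n]
      have expand : (M * (((Sᶜ ∩ Set.Icc (-(n : ℤ)) n).ncard : ℝ) / (2 * n + 1))
          + M * ((2 * N + 1 : ℝ) / (2 * n + 1))) * (2 * n + 1)
          = M * ((Sᶜ ∩ Set.Icc (-(n : ℤ)) n).ncard : ℝ) + M * (2 * N + 1) := by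
        field_simp
      rw [expand]; exact hbad
    linarith
  linarith

lemma wn_fourier_zpow (x : UnitAddCircle) (k : ℤ) :
    (fourier k x : ℂ) = ((AddCircle.toCircle x : ℂ)) ^ k := by
  rw [fourier_apply]
  norm_cast
  induction k using Int.induction_on with
  | zero => simp
  | succ i ih =>
      rw [add_smul, one_smul, AddCircle.toCircle_add, zpow_add_one]
      congr 1; congr 1; exact Subtype.ext ih
  | pred i ih =>
      have hneg : AddCircle.toCircle (-x) = (AddCircle.toCircle x)⁻¹ := by
        rw [eq_inv_iff_mul_eq_one, ← AddCircle.toCircle_add, neg_add_cancel,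
          AddCircle.toCircle_zero]
      rw [sub_smul, one_smul, sub_eq_add_neg, AddCircle.toCircle_add, hneg,
        zpow_sub_one]
      congr 1; congr 1; exact Subtype.ext ih

-- Dirichlet sum bound off the diagonal

lemma wn_dirichlet_bound (z : ℂ) (hz : ‖z‖ = 1) (hz1 : z ≠ 1) (n : ℕ) :
    ‖∑ k ∈ Finset.Icc (-(n : ℤ)) n, z ^ k‖ ≤ 2 / ‖z - 1‖ := by
  have hz0 : z ≠ 0 := by rintro rfl; simp at hz
  have key : (z - 1) * ∑ k ∈ Finset.Icc (-(n : ℤ)) n, z ^ k = z ^ (n + 1 : ℤ) - z ^ (-(n : ℤ)) := by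
    induction n with
    | zero => simp [mul_comm]
    | succ m ih =>
        have hins : Finset.Icc (-(m + 1 : ℕ) : ℤ) (m + 1 : ℕ)
            = insert (-(m + 1 : ℕ) : ℤ) (insert ((m + 1 : ℕ) : ℤ) (Finset.Icc (-(m : ℕ) : ℤ) m)) := by
          ext k
          simp only [Finset.mem_insert, Finset.mem_Icc]
          push_cast
          omega
        rw [hins, Finset.sum_insert, Finset.sum_insert]
        · push_cast
          rw [mul_add, mul_add, ih]
          rw [sub_mul, sub_mul, one_mul, one_mul]
          rw [show ((m:ℤ) + 1 + 1) = ((m:ℤ) + 1) + 1 by ring]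
          rw [zpow_add_one₀ hz0 ((m:ℤ)+1)]
          rw [show (-((m:ℤ) + 1)) = (-(m:ℤ)) - 1 by ring]
          rw [zpow_sub_one₀ hz0 (-(m:ℤ))]
          field_simp
          ring
        · simp only [Finset.mem_Icc]; push_cast; omega
        · simp only [Finset.mem_insert, Finset.mem_Icc]; push_cast; omega
  have hz1' : ‖z - 1‖ ≠ 0 := by
    simp only [ne_eq, norm_eq_zero, sub_eq_zero]; exact hz1
  have hnorm : ‖z - 1‖ * ‖∑ k ∈ Finset.Icc (-(n : ℤ)) n, z ^ k‖ ≤ 2 := by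
    rw [← norm_mul, key]
    calc ‖z ^ (n + 1 : ℤ) - z ^ (-(n : ℤ))‖ ≤ ‖z ^ (n + 1 : ℤ)‖ + ‖z ^ (-(n : ℤ))‖ := norm_sub_le _ _
      _ = 2 := by rw [norm_zpow, norm_zpow, hz]; norm_num
  rw [le_div_iff₀ (lt_of_le_of_ne (norm_nonneg _) (Ne.symm hz1'))]
  linarith [hnorm]

lemma wn_wiener (μ : Measure UnitAddCircle) [IsFiniteMeasure μ] :
    Tendsto (fun n : ℕ =>
        (∑ k ∈ Finset.Icc (-(n : ℤ)) n, ‖∫ t, fourier k t ∂μ‖ ^ 2) / (2 * n + 1))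
      atTop (nhds ((μ.prod μ) {p | p.1 = p.2}).toReal) := by
  have hint : ∀ k : ℤ, Integrable (fun t => (fourier k t : ℂ)) μ :=
    fun k => (map_continuous (fourier k)).integrable_of_hasCompactSupport
      (HasCompactSupport.of_compactSpace _)
  set ν := μ.prod μ with hν
  have hdiag : MeasurableSet {p : UnitAddCircle × UnitAddCircle | p.1 = p.2} :=
    (isClosed_eq continuous_fst continuous_snd).measurableSet
  -- the kernels
  set F : ℕ → UnitAddCircle × UnitAddCircle → ℂ := fun n p =>
    (2 * n + 1 : ℂ)⁻¹ * ∑ k ∈ Finset.Icc (-(n : ℤ)) n, fourier k (p.1 - p.2) with hF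
  have h2n : ∀ n : ℕ, ((2 * n + 1 : ℂ)) ≠ 0 := by
    intro n
    have : ((2 * n + 1 : ℕ) : ℂ) ≠ 0 := Nat.cast_ne_zero.2 (by omega)
    simpa [Nat.cast_add, Nat.cast_mul] using this
  have hcont : ∀ n : ℕ, Continuous (F n) := by
    intro n
    apply Continuous.mul continuous_const
    apply continuous_finset_sum
    intro k _
    exact (map_continuous (fourier k)).comp (continuous_fst.sub continuous_snd)
  have hfnorm : ∀ (k : ℤ) (x : UnitAddCircle), ‖(fourier k x : ℂ)‖ = 1 := by
    intro k x
    rw [fourier_apply]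
    exact Circle.norm_coe _
  -- identity: ∫ F n = cesaro sum
  have hid : ∀ n : ℕ, ∫ p, F n p ∂ν
      = Complex.ofReal ((∑ k ∈ Finset.Icc (-(n : ℤ)) n, ‖∫ t, fourier k t ∂μ‖ ^ 2) / (2 * n + 1)) := by
    intro n
    rw [hF]
    simp only
    rw [integral_const_mul]
    have hintk : ∀ k ∈ Finset.Icc (-(n : ℤ)) n,
        Integrable (fun p : UnitAddCircle × UnitAddCircle => (fourier k (p.1 - p.2) : ℂ)) ν :=
      fun k _ => (((map_continuous (fourier k)).comp
        (continuous_fst.sub continuous_snd)).integrable_of_hasCompactSupport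
        (HasCompactSupport.of_compactSpace _))
    rw [integral_finset_sum _ hintk]
    have hterm : ∀ k : ℤ, ∫ p : UnitAddCircle × UnitAddCircle, (fourier k (p.1 - p.2) : ℂ) ∂ν
        = ((‖∫ t, fourier k t ∂μ‖ ^ 2 : ℝ) : ℂ) := by
      intro k
      have hsplit : ∀ p : UnitAddCircle × UnitAddCircle,
          (fourier k (p.1 - p.2) : ℂ) = fourier k p.1 * (starRingEnd ℂ) (fourier k p.2) := by
        intro p
        rw [sub_eq_add_neg, fourier_apply, smul_add, AddCircle.toCircle_add, Circle.coe_mul,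
          ← fourier_apply, smul_neg, fourier_neg']
      simp_rw [hsplit]
      rw [integral_prod_mul (f := fun t => (fourier k t : ℂ))
        (g := fun t => (starRingEnd ℂ) (fourier k t))]
      rw [integral_conj]
      rw [RCLike.mul_conj]
      norm_cast
    rw [Finset.sum_congr rfl (fun k _ => hterm k)]
    push_cast
    ring
  -- limit via dominated convergence
  have hlim : Tendsto (fun n => ∫ p, F n p ∂ν) atTop
      (nhds (∫ p, Set.indicator {p : UnitAddCircle × UnitAddCircle | p.1 = p.2}
        (fun _ => (1 : ℂ)) p ∂ν)) := by
    apply tendsto_integral_of_dominated_convergence (fun _ => (1 : ℝ))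
    · exact fun n => (hcont n).aestronglyMeasurable
    · exact integrable_const 1
    · intro n
      refine Eventually.of_forall (fun p => ?_)
      rw [hF]
      simp only
      rw [norm_mul]
      calc ‖(2 * (n:ℂ) + 1)⁻¹‖ * ‖∑ k ∈ Finset.Icc (-(n : ℤ)) n, (fourier k (p.1 - p.2) : ℂ)‖
          ≤ ‖(2 * (n:ℂ) + 1)⁻¹‖ * ∑ k ∈ Finset.Icc (-(n : ℤ)) n, ‖(fourier k (p.1 - p.2) : ℂ)‖ :=
            mul_le_mul_of_nonneg_left (norm_sum_le _ _) (norm_nonneg _)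
        _ = 1 := by
            simp only [hfnorm, Finset.sum_const, wn_card_Icc, nsmul_eq_mul, mul_one]
            rw [norm_inv]
            have hnval : ‖(2 * (n:ℂ) + 1)‖ = 2 * (n:ℝ) + 1 := by
              rw [show (2 * (n:ℂ) + 1) = ((2 * (n:ℝ) + 1 : ℝ) : ℂ) by push_cast; ring,
                Complex.norm_real, Real.norm_eq_abs, abs_of_pos (by positivity)]
            rw [hnval]
            push_cast
            field_simp
    · refine Eventually.of_forall (fun p => ?_)
      by_cases hp : p.1 = p.2
      · have hval : ∀ n : ℕ, F n p = 1 := by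
          intro n
          rw [hF]
          simp only
          have : ∀ k ∈ Finset.Icc (-(n : ℤ)) n, (fourier k (p.1 - p.2) : ℂ) = 1 := by
            intro k _
            rw [hp, sub_self]
            exact fourier_eval_zero k
          rw [Finset.sum_congr rfl this, Finset.sum_const, wn_card_Icc, nsmul_eq_mul, mul_one]
          rw [show ((2 * n + 1 : ℕ) : ℂ) = 2 * (n : ℂ) + 1 by push_cast; ring,
            inv_mul_cancel₀ (h2n n)]
        rw [show ({p : UnitAddCircle × UnitAddCircle | p.1 = p.2}.indicator
            (fun _ => (1 : ℂ)) p) = 1 from Set.indicator_of_mem (s := {p : UnitAddCircle × UnitAddCircle | p.1 = p.2}) (a := p) hp _]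
        simp_rw [hval]
        exact tendsto_const_nhds
      · rw [show ({p : UnitAddCircle × UnitAddCircle | p.1 = p.2}.indicator
            (fun _ => (1 : ℂ)) p) = 0 from Set.indicator_of_notMem (s := {p : UnitAddCircle × UnitAddCircle | p.1 = p.2}) (a := p) hp _]
        set x := p.1 - p.2 with hx
        have hx0 : x ≠ 0 := sub_ne_zero.2 hp
        set z := (AddCircle.toCircle x : ℂ) with hz
        have hznorm : ‖z‖ = 1 := by
          rw [hz]; exact Circle.norm_coe _
        have hz1 : z ≠ 1 := by
          intro h
          apply hx0
          have : AddCircle.toCircle x = 1 := by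
            ext; exact h
          have h0 : AddCircle.toCircle (0 : UnitAddCircle) = 1 := AddCircle.toCircle_zero
          exact AddCircle.injective_toCircle one_ne_zero (this.trans h0.symm)
        have hbound : ∀ n : ℕ, ‖F n p‖ ≤ (2 / ‖z - 1‖) / (2 * n + 1) := by
          intro n
          rw [hF]
          simp only
          rw [norm_mul, norm_inv]
          have hnval : ‖(2 * (n:ℂ) + 1)‖ = 2 * (n:ℝ) + 1 := by
            rw [show (2 * (n:ℂ) + 1) = ((2 * (n:ℝ) + 1 : ℝ) : ℂ) by push_cast; ring,
              Complex.norm_real, Real.norm_eq_abs, abs_of_pos (by positivity)]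
          have hsum : ‖∑ k ∈ Finset.Icc (-(n : ℤ)) n, (fourier k x : ℂ)‖ ≤ 2 / ‖z - 1‖ := by
            have : ∀ k ∈ Finset.Icc (-(n : ℤ)) n, (fourier k x : ℂ) = z ^ k :=
              fun k _ => wn_fourier_zpow x k
            rw [Finset.sum_congr rfl this]
            exact wn_dirichlet_bound z hznorm hz1 n
          rw [hnval]
          calc (2 * (n:ℝ) + 1)⁻¹ * ‖∑ k ∈ Finset.Icc (-(n : ℤ)) n, (fourier k x : ℂ)‖
              ≤ (2 * (n:ℝ) + 1)⁻¹ * (2 / ‖z - 1‖) :=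
                mul_le_mul_of_nonneg_left hsum (by positivity)
            _ = (2 / ‖z - 1‖) / (2 * n + 1) := by ring
        have htend : Tendsto (fun n : ℕ => (2 / ‖z - 1‖) / (2 * n + 1)) atTop (nhds 0) := by
          apply Filter.Tendsto.div_atTop tendsto_const_nhds
          apply Filter.tendsto_atTop_add_const_right
          exact Tendsto.const_mul_atTop two_pos tendsto_natCast_atTop_atTop
        exact squeeze_zero_norm hbound htend
  -- put everything together
  rw [integral_indicator_const _ hdiag, Complex.real_smul, mul_one] at hlim
  have hlim2 : Tendsto (fun n : ℕ =>
      Complex.ofReal ((∑ k ∈ Finset.Icc (-(n : ℤ)) n, ‖∫ t, fourier k t ∂μ‖ ^ 2) / (2 * n + 1)))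
      atTop (nhds ((ν {p | p.1 = p.2}).toReal : ℂ)) := by
    refine hlim.congr fun n => hid n
  have := (Complex.continuous_re.tendsto _).comp hlim2
  exact this.congr fun n => Complex.ofReal_re _


/-- Wiener's theorem: a finite Borel measure on the circle `ℝ/ℤ` is non-atomic iff its
Fourier coefficients tend to `0` along a set of integers of full density. -/
theorem wiener_nonatomic_iff_fourier_tendsto_zero_along_full_density
    (μ : Measure UnitAddCircle) [IsFiniteMeasure μ] :
    (∀ x : UnitAddCircle, μ {x} = 0) ↔
      ∃ S : Set ℤ,
        Filter.Tendsto
          (fun n : ℕ => ((S ∩ Set.Icc (-(n : ℤ)) (n : ℤ)).ncard : ℝ) / (2 * n + 1))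
          Filter.atTop (nhds 1) ∧
        ∀ ε > (0 : ℝ), ∃ N : ℕ, ∀ k ∈ S, (N : ℤ) ≤ |k| →
          ‖∫ t, fourier k t ∂μ‖ < ε := by
  have hdiag : MeasurableSet {p : UnitAddCircle × UnitAddCircle | p.1 = p.2} :=
    (isClosed_eq continuous_fst continuous_snd).measurableSet
  constructor
  · intro h
    have hdiag0 : (μ.prod μ) {p : UnitAddCircle × UnitAddCircle | p.1 = p.2} = 0 := by
      rw [Measure.prod_apply hdiag]
      have : ∀ x : UnitAddCircle,
          μ (Prod.mk x ⁻¹' {p : UnitAddCircle × UnitAddCircle | p.1 = p.2}) = 0 := by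
        intro x
        have hpre : (Prod.mk x ⁻¹' {p : UnitAddCircle × UnitAddCircle | p.1 = p.2}) = {x} := by
          ext y
          simp [eq_comm]
        rw [hpre]
        exact h x
      simp only [this]
      exact lintegral_zero
    have hces : Tendsto (fun n : ℕ =>
        (∑ k ∈ Finset.Icc (-(n : ℤ)) n, ‖∫ t, fourier k t ∂μ‖ ^ 2) / (2 * n + 1))
        atTop (nhds 0) := by
      have := wn_wiener μ
      rwa [hdiag0, ENNReal.toReal_zero] at this
    obtain ⟨S, hSdens, hSconv⟩ := wn_extract (fun k => ‖∫ t, fourier k t ∂μ‖ ^ 2)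
      (fun k => by positivity) hces
    refine ⟨S, hSdens, fun ε hε => ?_⟩
    obtain ⟨N, hN⟩ := hSconv (ε ^ 2) (by positivity)
    refine ⟨N, fun k hk hNk => ?_⟩
    have := hN k hk hNk
    exact lt_of_pow_lt_pow_left₀ 2 hε.le this
  · rintro ⟨S, hSdens, hSconv⟩
    have hM : ∀ k : ℤ, ‖∫ t, fourier k t ∂μ‖ ≤ (μ Set.univ).toReal := by
      intro k
      calc ‖∫ t, fourier k t ∂μ‖ ≤ ∫ t, ‖(fourier k t : ℂ)‖ ∂μ := norm_integral_le_integral_norm _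
        _ = (μ Set.univ).toReal := by
            have : ∀ t : UnitAddCircle, ‖(fourier k t : ℂ)‖ = 1 := by
              intro t
              rw [fourier_apply]
              exact Circle.norm_coe _
            simp only [this]
            rw [integral_const, smul_eq_mul, mul_one]; rfl
    have hces : Tendsto (fun n : ℕ =>
        (∑ k ∈ Finset.Icc (-(n : ℤ)) n, ‖∫ t, fourier k t ∂μ‖ ^ 2) / (2 * n + 1))
        atTop (nhds 0) := by
      apply wn_cesaro (fun k => ‖∫ t, fourier k t ∂μ‖ ^ 2) (fun k => by positivity)
        ((μ Set.univ).toReal ^ 2)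
        (fun k => pow_le_pow_left₀ (norm_nonneg _) (hM k) 2) S hSdens
      intro ε hε
      obtain ⟨N, hN⟩ := hSconv (Real.sqrt ε) (Real.sqrt_pos.2 hε)
      refine ⟨N, fun k hk hNk => ?_⟩
      have h1 := hN k hk hNk
      calc ‖∫ t, fourier k t ∂μ‖ ^ 2 < Real.sqrt ε ^ 2 :=
            pow_lt_pow_left₀ h1 (norm_nonneg _) two_ne_zero
        _ = ε := Real.sq_sqrt hε.le
    have hzero : ((μ.prod μ) {p : UnitAddCircle × UnitAddCircle | p.1 = p.2}).toReal = 0 :=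
      tendsto_nhds_unique (wn_wiener μ) hces
    have hzero' : (μ.prod μ) {p : UnitAddCircle × UnitAddCircle | p.1 = p.2} = 0 := by
      have hne : (μ.prod μ) {p : UnitAddCircle × UnitAddCircle | p.1 = p.2} ≠ ⊤ :=
        measure_ne_top _ _
      exact (ENNReal.toReal_eq_zero_iff _).1 hzero |>.resolve_right hne
    intro x
    have hsub : ({x} ×ˢ {x} : Set (UnitAddCircle × UnitAddCircle))
        ⊆ {p : UnitAddCircle × UnitAddCircle | p.1 = p.2} := by
      rintro ⟨a, b⟩ ⟨ha, hb⟩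
      simp only [Set.mem_singleton_iff] at ha hb
      simp [ha, hb]
    have hle : (μ.prod μ) ({x} ×ˢ {x}) = 0 :=
      le_antisymm (hzero' ▸ measure_mono hsub) zero_le
    rw [Measure.prod_prod] at hle
    rcases mul_eq_zero.1 hle with h | h <;> exact h
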